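/- Let Δ : U_q(sl_n(ℂ)) → U_q(sl_n(ℂ)) ⊗_ℂ U_q(sl_n(ℂ)) be any ℂ-algebra homomorphism satisfying Δ(e_i) = e_i ⊗ k_i^{-1} + 1 ⊗ e_i, Δ(f_i) = f_i ⊗ 1 + k_i ⊗ f_i, and Δ(k_i^{±1}) = k_i^{±1} ⊗ k_i^{±1} for all i = 1,…,n−1. Then for all 1 ≤ i < j ≤ n one has Δ(E_{j,i}) = K_{i,j} ⊗ E_{j,i} + E_{j,i} ⊗ 1 + (q − q^{-1}) Σ_{i<k<j} E_{k,i}K_{k,j} ⊗ E_{j,k}. -/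

import Mathlib

noncomputable section

/-- The `q`-number `[s]_q = (q^s - q^{-s})/(q - q^{-1})`. -/
def qnum (q : ℂ) (s : ℕ) : ℂ := (q ^ s - q⁻¹ ^ s) / (q - q⁻¹)

/-- The Cartan matrix of `sl_n`: `a_{ii} = 2`, `a_{ij} = -1` if `|i-j| = 1`, else `0`. -/
def cartan (i j : ℕ) : ℤ := if i = j then 2 else if i + 1 = j ∨ j + 1 = i then -1 else 0

variable {U : Type*} [Ring U] [Algebra ℂ U]

/-- Auxiliary: `EupAux q e i g = E_{i,i+1+g}`, the raising root vectors indexed by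
the gap `g`, built from the generators `e` by
`E_{i,i+1} = e_i`, `E_{i,j} = E_{i,j-1}E_{j-1,j} − q·E_{j-1,j}E_{i,j-1}`. -/
def EupAux (q : ℂ) (e : ℕ → U) (i : ℕ) : ℕ → U
  | 0 => e i
  | g + 1 => EupAux q e i g * e (i + g + 1) - q • (e (i + g + 1) * EupAux q e i g)

/-- The raising root vector `E_{i,j}` (intended for `i < j`). -/
def Eup (q : ℂ) (e : ℕ → U) (i j : ℕ) : U := EupAux q e i (j - i - 1)

/-- Auxiliary: `EdnAux q f j g = E_{j,j-1-g}`, the lowering root vectors indexed by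
the gap `g`, built from the generators `f` by
`E_{i+1,i} = f_i`, `E_{j,i} = E_{j,i+1}E_{i+1,i} − q⁻¹·E_{i+1,i}E_{j,i+1}`. -/
def EdnAux (q : ℂ) (f : ℕ → U) (j : ℕ) : ℕ → U
  | 0 => f (j - 1)
  | g + 1 => EdnAux q f j g * f (j - g - 2) - q⁻¹ • (f (j - g - 2) * EdnAux q f j g)

/-- The lowering root vector `E_{j,i}` (intended for `i < j`). -/
def Edn (q : ℂ) (f : ℕ → U) (j i : ℕ) : U := EdnAux q f j (j - i - 1)

/-- `K_{i,j} = k_i k_{i+1} ⋯ k_{j-1}`. -/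
def Kprod (k : ℕ → U) (i j : ℕ) : U := ((List.range' i (j - i)).map k).prod


section Helpers

variable {U : Type*} [Ring U] [Algebra ℂ U]

lemma EdnAux_commute (q : ℂ) (f : ℕ → U) (x : U) (j : ℕ) :
    ∀ g, (∀ s, j - 1 - g ≤ s → s ≤ j - 1 → Commute x (f s)) → Commute x (EdnAux q f j g)
  | 0, h => h (j - 1) (by omega) le_rfl
  | g + 1, h => by
    have h1 : Commute x (EdnAux q f j g) :=
      EdnAux_commute q f x j g (fun s hs1 hs2 => h s (by omega) hs2)
    have h2 : Commute x (f (j - g - 2)) := h (j - g - 2) (by omega) (by omega)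
    show Commute x (EdnAux q f j g * f (j - g - 2) - q⁻¹ • (f (j - g - 2) * EdnAux q f j g))
    exact (h1.mul_right h2).sub_right ((h2.mul_right h1).smul_right _)

lemma Edn_commute (q : ℂ) (f : ℕ → U) (x : U) {i j : ℕ} (hij : i < j)
    (h : ∀ s, i ≤ s → s ≤ j - 1 → Commute x (f s)) : Commute x (Edn q f j i) :=
  EdnAux_commute q f x j _ (fun s hs1 hs2 => h s (by omega) hs2)

lemma Edn_one (q : ℂ) (f : ℕ → U) (i : ℕ) : Edn q f (i + 1) i = f i := by
  simp [Edn, EdnAux]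

lemma Edn_succ (q : ℂ) (f : ℕ → U) {i j : ℕ} (h : i + 1 < j) :
    Edn q f j i = Edn q f j (i + 1) * f i - q⁻¹ • (f i * Edn q f j (i + 1)) := by
  unfold Edn
  have h1 : j - i - 1 = (j - (i + 1) - 1) + 1 := by omega
  rw [h1, EdnAux, show j - (j - (i + 1) - 1) - 2 = i from by omega]

omit [Algebra ℂ U] in
lemma Kprod_single (ka : ℕ → U) (i : ℕ) : Kprod ka i (i + 1) = ka i := by
  simp [Kprod]

omit [Algebra ℂ U] in
lemma Kprod_cons (ka : ℕ → U) {i j : ℕ} (h : i < j) :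
    Kprod ka i j = ka i * Kprod ka (i + 1) j := by
  unfold Kprod
  have h1 : j - i = (j - (i + 1)) + 1 := by omega
  rw [h1, List.range'_succ, List.map_cons, List.prod_cons]

omit [Algebra ℂ U] in
lemma Kprod_commute (ka : ℕ → U) (x : U) {i j : ℕ}
    (h : ∀ s, i ≤ s → s < j → Commute x (ka s)) : Commute x (Kprod ka i j) := by
  apply Commute.list_prod_right
  intro y hy
  simp only [List.mem_map, List.mem_range'_1] at hy
  obtain ⟨s, hs, rfl⟩ := hy
  exact h s hs.1 (by omega)

lemma qcomm_step (c q : ℂ) (a x y : U) (hax : a * x = c • (x * a)) (hay : Commute a y) :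
    a * (y * x - q⁻¹ • (x * y)) = c • ((y * x - q⁻¹ • (x * y)) * a) := by
  have h1 : a * (y * x) = c • (y * x * a) := by
    rw [← mul_assoc, hay.eq, mul_assoc, hax, mul_smul_comm, mul_assoc]
  have h2 : a * (x * y) = c • (x * y * a) := by
    rw [← mul_assoc, hax, smul_mul_assoc, mul_assoc, mul_assoc, ← hay.eq, ← mul_assoc]
  rw [mul_sub, sub_mul, smul_sub, h1, mul_smul_comm, h2, smul_comm q⁻¹ c, smul_mul_assoc]

end Helpers

open scoped TensorProduct in
/-- in `U_q(sl_n(ℂ))` (formalized universally over algebras with elements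
satisfying the defining relations), if `Δ : U_q(sl_n) → U_q(sl_n) ⊗ U_q(sl_n)` is any
`ℂ`-algebra homomorphism with `Δ(e_i) = e_i ⊗ k_i⁻¹ + 1 ⊗ e_i`,
`Δ(f_i) = f_i ⊗ 1 + k_i ⊗ f_i`, `Δ(k_i^{±1}) = k_i^{±1} ⊗ k_i^{±1}`, then for `1 ≤ i < j ≤ n`:
`Δ(E_{j,i}) = K_{i,j} ⊗ E_{j,i} + E_{j,i} ⊗ 1 + (q − q⁻¹)·Σ_{i<c<j} E_{c,i}K_{c,j} ⊗ E_{j,c}`. -/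
theorem stmt16 {U : Type*} [Ring U] [Algebra ℂ U]
    (q : ℂ) (hq0 : q ≠ 0) (hq1 : q ≠ 1) (hqm1 : q ≠ -1)
    (n : ℕ) (hn : 2 ≤ n)
    (e f ka kinv : ℕ → U)
    (hkk : ∀ i, 1 ≤ i → i ≤ n - 1 → ka i * kinv i = 1)
    (hkk' : ∀ i, 1 ≤ i → i ≤ n - 1 → kinv i * ka i = 1)
    (hkcomm : ∀ i j, 1 ≤ i → i ≤ n - 1 → 1 ≤ j → j ≤ n - 1 → ka i * ka j = ka j * ka i)
    (hke : ∀ i j, 1 ≤ i → i ≤ n - 1 → 1 ≤ j → j ≤ n - 1 →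
      ka i * e j * kinv i = (q ^ cartan i j) • e j)
    (hkf : ∀ i j, 1 ≤ i → i ≤ n - 1 → 1 ≤ j → j ≤ n - 1 →
      ka i * f j * kinv i = (q ^ (-cartan i j)) • f j)
    (hef : ∀ i j, 1 ≤ i → i ≤ n - 1 → 1 ≤ j → j ≤ n - 1 →
      e i * f j - f j * e i = if i = j then (q - q⁻¹)⁻¹ • (ka i - kinv i) else 0)
    (hee : ∀ i j, 1 ≤ i → i ≤ n - 1 → 1 ≤ j → j ≤ n - 1 → (i + 1 = j ∨ j + 1 = i) →
      e i ^ 2 * e j - (q + q⁻¹) • (e i * e j * e i) + e j * e i ^ 2 = 0)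
    (hff : ∀ i j, 1 ≤ i → i ≤ n - 1 → 1 ≤ j → j ≤ n - 1 → (i + 1 = j ∨ j + 1 = i) →
      f i ^ 2 * f j - (q + q⁻¹) • (f i * f j * f i) + f j * f i ^ 2 = 0)
    (heecomm : ∀ i j, 1 ≤ i → i ≤ n - 1 → 1 ≤ j → j ≤ n - 1 → (i + 1 < j ∨ j + 1 < i) →
      e i * e j = e j * e i)
    (hffcomm : ∀ i j, 1 ≤ i → i ≤ n - 1 → 1 ≤ j → j ≤ n - 1 → (i + 1 < j ∨ j + 1 < i) →
      f i * f j = f j * f i)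
    (Δ : U →ₐ[ℂ] (U ⊗[ℂ] U))
    (hΔe : ∀ i, 1 ≤ i → i ≤ n - 1 → Δ (e i) = e i ⊗ₜ[ℂ] kinv i + 1 ⊗ₜ[ℂ] e i)
    (hΔf : ∀ i, 1 ≤ i → i ≤ n - 1 → Δ (f i) = f i ⊗ₜ[ℂ] 1 + ka i ⊗ₜ[ℂ] f i)
    (hΔk : ∀ i, 1 ≤ i → i ≤ n - 1 → Δ (ka i) = ka i ⊗ₜ[ℂ] ka i)
    (hΔkinv : ∀ i, 1 ≤ i → i ≤ n - 1 → Δ (kinv i) = kinv i ⊗ₜ[ℂ] kinv i) :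
    ∀ i j : ℕ, 1 ≤ i → i < j → j ≤ n →
      Δ (Edn q f j i) =
        Kprod ka i j ⊗ₜ[ℂ] Edn q f j i + Edn q f j i ⊗ₜ[ℂ] (1 : U) +
          (q - q⁻¹) • ∑ c ∈ Finset.Ioo i j,
            (Edn q f c i * Kprod ka c j) ⊗ₜ[ℂ] Edn q f j c := by
  have hkaf : ∀ m s, 1 ≤ m → m ≤ n - 1 → 1 ≤ s → s ≤ n - 1 →
      ka m * f s = (q ^ (-cartan m s)) • (f s * ka m) := by
    intro m s hm1 hm2 hs1 hs2
    have h1 := hkf m s hm1 hm2 hs1 hs2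
    have h2 := hkk' m hm1 hm2
    calc ka m * f s = ka m * f s * (kinv m * ka m) := by rw [h2, mul_one]
      _ = (ka m * f s * kinv m) * ka m := by rw [mul_assoc (ka m * f s)]
      _ = (q ^ (-cartan m s)) • (f s * ka m) := by rw [h1, smul_mul_assoc]
  have hkafq : ∀ m s, 1 ≤ m → m ≤ n - 1 → 1 ≤ s → s ≤ n - 1 → (m + 1 = s ∨ s + 1 = m) →
      ka m * f s = q • (f s * ka m) := by
    intro m s hm1 hm2 hs1 hs2 hadj
    rw [hkaf m s hm1 hm2 hs1 hs2]
    have hc : cartan m s = -1 := by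
      unfold cartan; rw [if_neg (by omega), if_pos hadj]
    rw [hc]; norm_num
  have hkaf0 : ∀ m s, 1 ≤ m → m ≤ n - 1 → 1 ≤ s → s ≤ n - 1 → (m + 1 < s ∨ s + 1 < m) →
      Commute (ka m) (f s) := by
    intro m s hm1 hm2 hs1 hs2 hfar
    have hc : cartan m s = 0 := by unfold cartan; rw [if_neg (by omega), if_neg (by omega)]
    have h := hkaf m s hm1 hm2 hs1 hs2
    rw [hc] at h; exact (by simpa using h : ka m * f s = f s * ka m)
  suffices H : ∀ d : ℕ, ∀ i j : ℕ, 1 ≤ i → i < j → j ≤ n → j = i + d + 1 →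
      Δ (Edn q f j i) =
        Kprod ka i j ⊗ₜ[ℂ] Edn q f j i + Edn q f j i ⊗ₜ[ℂ] (1 : U) +
          (q - q⁻¹) • ∑ c ∈ Finset.Ioo i j,
            (Edn q f c i * Kprod ka c j) ⊗ₜ[ℂ] Edn q f j c by
    intro i j h1 h2 h3
    exact H (j - i - 1) i j h1 h2 h3 (by omega)
  intro d
  induction d with
  | zero =>
    intro i j h1 h2 h3 hd
    subst hd
    rw [show i + 0 + 1 = i + 1 from rfl] at *
    have hempty : Finset.Ioo i (i + 1) = ∅ := by ext c; simp
    rw [Edn_one, Kprod_single, hempty, Finset.sum_empty, smul_zero,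
      add_zero, hΔf i h1 (by omega), add_comm]
  | succ d ih =>
    intro i j h1 h2 h3 hd
    have hj : i + 1 < j := by omega
    have hin : i ≤ n - 1 := by omega
    have hIH := ih (i + 1) j (by omega) hj h3 (by omega)
    -- commutation facts
    have hfiK : ∀ c, i + 2 ≤ c → Commute (f i) (Kprod ka c j) := fun c hc =>
      Kprod_commute ka (f i) (fun s hs1 hs2 =>
        (hkaf0 s i (by omega) (by omega) h1 hin (Or.inr (by omega))).symm)
    have hkiK : ∀ c, i + 1 ≤ c → Commute (ka i) (Kprod ka c j) := fun c hc =>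
      Kprod_commute ka (ka i) (fun s hs1 hs2 =>
        hkcomm i s h1 hin (by omega) (by omega))
    have hA_fi : Kprod ka (i+1) j * f i = q • (f i * Kprod ka (i+1) j) := by
      rw [Kprod_cons ka hj]
      have hK' := hfiK (i+2) le_rfl
      have hq' := hkafq (i+1) i (by omega) (by omega) h1 hin (Or.inr rfl)
      calc ka (i+1) * Kprod ka (i+2) j * f i
          = ka (i+1) * (f i * Kprod ka (i+2) j) := by rw [mul_assoc, ← hK'.eq]
        _ = (ka (i+1) * f i) * Kprod ka (i+2) j := by rw [mul_assoc]
        _ = q • (f i * (ka (i+1) * Kprod ka (i+2) j)) := by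
            rw [hq', smul_mul_assoc, mul_assoc]
    have hki_E : ∀ c, i + 1 < c → c ≤ n → ka i * Edn q f c (i+1) = q • (Edn q f c (i+1) * ka i) := by
      intro c hc1 hc2
      have hq' := hkafq i (i+1) h1 hin (by omega) (by omega) (Or.inl rfl)
      rcases Nat.lt_or_ge (i+2) c with hcc | hcc
      · rw [Edn_succ q f (show (i+1)+1 < c from hcc)]
        exact qcomm_step q q (ka i) (f (i+1)) (Edn q f c (i+2)) hq'
          (Edn_commute q f (ka i) (by omega) (fun s hs1 hs2 =>
            hkaf0 i s h1 hin (by omega) (by omega) (Or.inl (by omega))))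
      · have hcc2 : c = i + 2 := by omega
        subst hcc2
        rw [show i + 2 = (i+1) + 1 from rfl, Edn_one]
        exact hq'
    have hfi_E : ∀ c, i + 2 ≤ c → c < j → Commute (f i) (Edn q f j c) := fun c hc1 hc2 =>
      Edn_commute q f (f i) hc2 (fun s hs1 hs2 =>
        hffcomm i s h1 hin (by omega) (by omega) (Or.inl (by omega)))
    rw [Edn_succ q f hj, map_sub, map_mul, map_smul, map_mul, hIH, hΔf i h1 hin]
    rw [Kprod_cons ka (show i < j by omega)]
    rw [show Finset.Ioo i j = insert (i+1) (Finset.Ioo (i+1) j) from by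
      ext c; simp; omega]
    rw [Finset.sum_insert (by simp), Edn_one]
    have hsumR : ∑ c ∈ Finset.Ioo (i+1) j, (Edn q f c i * Kprod ka c j) ⊗ₜ[ℂ] Edn q f j c
        = ∑ c ∈ Finset.Ioo (i+1) j,
            ((Edn q f c (i+1) * f i * Kprod ka c j) ⊗ₜ[ℂ] Edn q f j c
              - q⁻¹ • ((f i * Edn q f c (i+1) * Kprod ka c j) ⊗ₜ[ℂ] Edn q f j c)) := by
      refine Finset.sum_congr rfl (fun c hc => ?_)
      obtain ⟨hc1, hc2⟩ := Finset.mem_Ioo.mp hc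
      rw [Edn_succ q f hc1, sub_mul, smul_mul_assoc, TensorProduct.sub_tmul,
        TensorProduct.smul_tmul']
    rw [hsumR]
    simp only [add_mul, mul_add, sub_mul, mul_sub, smul_mul_assoc, mul_smul_comm,
      Finset.sum_mul, Finset.mul_sum, Algebra.TensorProduct.tmul_mul_tmul, one_mul, mul_one,
      TensorProduct.tmul_sub, TensorProduct.sub_tmul, ← TensorProduct.smul_tmul',
      TensorProduct.tmul_smul, smul_sub, smul_add, smul_smul, Finset.smul_sum,
      Finset.sum_sub_distrib]
    -- pointwise commutation rewrites
    rw [hA_fi, ← TensorProduct.smul_tmul', ← (hkiK (i+1) le_rfl).eq,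
      hki_E j hj h3, ← TensorProduct.smul_tmul', smul_smul]
    -- sum rewrites
    have hs1 : ∀ c ∈ Finset.Ioo (i+1) j,
        Edn q f c (i+1) * Kprod ka c j * f i = Edn q f c (i+1) * f i * Kprod ka c j := by
      intro c hc
      obtain ⟨hc1, hc2⟩ := Finset.mem_Ioo.mp hc
      rw [mul_assoc, ← (hfiK c (by omega)).eq, ← mul_assoc]
    have hs2 : ∀ c ∈ Finset.Ioo (i+1) j,
        ka i * (Edn q f c (i+1) * Kprod ka c j)
          = q • (Edn q f c (i+1) * Kprod ka c j * ka i) := by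
      intro c hc
      obtain ⟨hc1, hc2⟩ := Finset.mem_Ioo.mp hc
      rw [← mul_assoc, hki_E c hc1 (by omega), smul_mul_assoc, mul_assoc,
        (hkiK c (by omega)).eq, ← mul_assoc]
    have hs3 : ∀ c ∈ Finset.Ioo (i+1) j,
        f i * Edn q f j c = Edn q f j c * f i := by
      intro c hc
      obtain ⟨hc1, hc2⟩ := Finset.mem_Ioo.mp hc
      exact (hfi_E c (by omega) hc2).eq
    have hS1 : ∑ x ∈ Finset.Ioo (i+1) j,
        (q - q⁻¹) • (Edn q f x (i+1) * Kprod ka x j * f i) ⊗ₜ[ℂ] Edn q f j x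
        = (q - q⁻¹) • ∑ x ∈ Finset.Ioo (i+1) j,
            (Edn q f x (i+1) * f i * Kprod ka x j) ⊗ₜ[ℂ] Edn q f j x := by
      rw [Finset.smul_sum]
      exact Finset.sum_congr rfl (fun c hc => by rw [hs1 c hc])
    have hS2 : ∑ x ∈ Finset.Ioo (i+1) j,
        (q - q⁻¹) • (Edn q f x (i+1) * Kprod ka x j * ka i) ⊗ₜ[ℂ] (Edn q f j x * f i)
        = (q - q⁻¹) • ∑ x ∈ Finset.Ioo (i+1) j,
            (Edn q f x (i+1) * Kprod ka x j * ka i) ⊗ₜ[ℂ] (Edn q f j x * f i) :=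
      (Finset.smul_sum).symm
    have hS3 : ∑ x ∈ Finset.Ioo (i+1) j,
        ((q⁻¹ * q - q⁻¹ * q⁻¹) • (f i * (Edn q f x (i+1) * Kprod ka x j)) ⊗ₜ[ℂ] Edn q f j x +
          (q⁻¹ * q - q⁻¹ * q⁻¹) • (ka i * (Edn q f x (i+1) * Kprod ka x j)) ⊗ₜ[ℂ]
            (f i * Edn q f j x))
        = (q⁻¹ * q - q⁻¹ * q⁻¹) • ∑ x ∈ Finset.Ioo (i+1) j,
            (f i * Edn q f x (i+1) * Kprod ka x j) ⊗ₜ[ℂ] Edn q f j x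
          + ((q⁻¹ * q - q⁻¹ * q⁻¹) * q) • ∑ x ∈ Finset.Ioo (i+1) j,
            (Edn q f x (i+1) * Kprod ka x j * ka i) ⊗ₜ[ℂ] (Edn q f j x * f i) := by
      rw [Finset.sum_add_distrib, Finset.smul_sum, Finset.smul_sum]
      congr 1
      · exact Finset.sum_congr rfl (fun c hc => by rw [← mul_assoc])
      · exact Finset.sum_congr rfl (fun c hc => by
          rw [hs2 c hc, hs3 c hc, ← TensorProduct.smul_tmul', smul_smul])
    have hS4 : ∑ x ∈ Finset.Ioo (i+1) j,
        (q - q⁻¹) • (Edn q f x (i+1) * f i * Kprod ka x j) ⊗ₜ[ℂ] Edn q f j x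
        = (q - q⁻¹) • ∑ x ∈ Finset.Ioo (i+1) j,
            (Edn q f x (i+1) * f i * Kprod ka x j) ⊗ₜ[ℂ] Edn q f j x :=
      (Finset.smul_sum).symm
    have hS5 : ∑ x ∈ Finset.Ioo (i+1) j,
        (q * q⁻¹ - q⁻¹ * q⁻¹) • (f i * Edn q f x (i+1) * Kprod ka x j) ⊗ₜ[ℂ] Edn q f j x
        = (q * q⁻¹ - q⁻¹ * q⁻¹) • ∑ x ∈ Finset.Ioo (i+1) j,
            (f i * Edn q f x (i+1) * Kprod ka x j) ⊗ₜ[ℂ] Edn q f j x :=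
      (Finset.smul_sum).symm
    rw [hS1, hS2, hS3, hS4, hS5]
    match_scalars <;> field_simp <;> ring
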